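/- Let i,j,k ≥ 0 with i+j+k even, and suppose L = (i+j+k)/2 satisfies L ≥ max(i,j,k) (so the 18-neighbor distance from the origin to (i,j,k) is L). Then the number of shortest 18-neighbor paths from (0,0,0) to (i,j,k) equals L! / ((L−i)!·(L−j)!·(L−k)!). -/

import Mathlib

/-- Two points of `ℤ³` are 18-neighbors: distinct, each coordinate differs by at most 1,
and the sum of absolute coordinate differences is at most 2. -/
def Adj18 (p q : ℤ × ℤ × ℤ) : Prop :=
  p ≠ q ∧ (p.1 - q.1).natAbs ≤ 1 ∧ (p.2.1 - q.2.1).natAbs ≤ 1 ∧ (p.2.2 - q.2.2).natAbs ≤ 1 ∧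
    (p.1 - q.1).natAbs + (p.2.1 - q.2.1).natAbs + (p.2.2 - q.2.2).natAbs ≤ 2

/-- `f` is an 18-neighbor path of length `n` from `p` to `q`. -/
def IsPath18 (n : ℕ) (f : Fin (n + 1) → ℤ × ℤ × ℤ) (p q : ℤ × ℤ × ℤ) : Prop :=
  f 0 = p ∧ f (Fin.last n) = q ∧ ∀ t : Fin n, Adj18 (f t.castSucc) (f t.succ)

/-! ### Auxiliary material -/

open Finset

/-- The three step vectors available in a shortest path. -/
def V18 : Fin 3 → ℤ × ℤ × ℤ := ![(0,1,1), (1,0,1), (1,1,0)]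

/-- Classify a step vector. -/
def classify18 (d : ℤ × ℤ × ℤ) : Fin 3 :=
  if d = V18 1 then 1 else if d = V18 2 then 2 else 0

lemma classify18_V (m : Fin 3) : classify18 (V18 m) = m := by
  fin_cases m <;> simp [classify18, V18]

lemma adj18_V (p : ℤ × ℤ × ℤ) (m : Fin 3) : Adj18 p (p + V18 m) := by
  obtain ⟨x, y, z⟩ := p
  fin_cases m <;> simp [Adj18, V18, Prod.ext_iff]

lemma step_class (p q : ℤ × ℤ × ℤ) (h : Adj18 p q)
    (h2 : (q.1 - p.1) + (q.2.1 - p.2.1) + (q.2.2 - p.2.2) = 2) :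
    ∃ m : Fin 3, q = p + V18 m := by
  obtain ⟨_, h1, h21, h22, hs⟩ := h
  obtain ⟨x, y, z⟩ := p
  obtain ⟨x', y', z'⟩ := q
  simp only at h1 h21 h22 hs h2
  have : (x' = x ∧ y' = y + 1 ∧ z' = z + 1) ∨ (x' = x + 1 ∧ y' = y ∧ z' = z + 1)
      ∨ (x' = x + 1 ∧ y' = y + 1 ∧ z' = z) := by omega
  rcases this with ⟨h1,h2,h3⟩ | ⟨h1,h2,h3⟩ | ⟨h1,h2,h3⟩
  · exact ⟨0, by simp [V18, Prod.ext_iff, h1, h2, h3]⟩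
  · exact ⟨1, by simp [V18, Prod.ext_iff, h1, h2, h3]⟩
  · exact ⟨2, by simp [V18, Prod.ext_iff, h1, h2, h3]⟩

lemma telescope18 {M : Type*} [AddCommGroup M] {n : ℕ} (g : Fin (n+1) → M) :
    ∑ t : Fin n, (g t.succ - g t.castSucc) = g (Fin.last n) - g 0 := by
  induction n with
  | zero => simp
  | succ n ih =>
    rw [Fin.sum_univ_castSucc]
    have h := ih (fun t => g t.castSucc)
    simp only [Fin.succ_castSucc] at h ⊢
    rw [h]
    simp [Fin.succ_last]

lemma partialSum_last {M : Type*} [AddCommMonoid M] {n : ℕ} (f : Fin n → M) :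
    Fin.partialSum f (Fin.last n) = ∑ t, f t := by
  simp [Fin.partialSum, List.take_of_length_le (le_of_eq (List.length_ofFn (f := f))), List.sum_ofFn]

lemma partialSum_steps {M : Type*} [AddCommGroup M] {n : ℕ} (f : Fin (n+1) → M)
    (h0 : f 0 = 0) : Fin.partialSum (fun t => f t.succ - f t.castSucc) = f := by
  funext t
  induction t using Fin.induction with
  | zero => simp [h0]
  | succ t ih => rw [Fin.partialSum_succ, ih]; abel

lemma path_steps {i j k L : ℕ} (hL : i + j + k = 2 * L)
    {f : Fin (L + 1) → ℤ × ℤ × ℤ}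
    (hf : IsPath18 L f (0,0,0) ((i : ℤ), (j : ℤ), (k : ℤ))) (t : Fin L) :
    ∃ m : Fin 3, f t.succ = f t.castSucc + V18 m := by
  obtain ⟨h0, hlast, hadj⟩ := hf
  set g : Fin (L + 1) → ℤ := fun t => (f t).1 + (f t).2.1 + (f t).2.2 with hg
  have hsum : ∑ t : Fin L, (g t.succ - g t.castSucc) = 2 * L := by
    rw [telescope18 g, hg]
    simp [h0, hlast]
    push_cast [← hL]
    omega
  have hle : ∀ t : Fin L, g t.succ - g t.castSucc ≤ 2 := by
    intro t
    obtain ⟨_, h1, h21, h22, hs⟩ := hadj t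
    simp only [hg]
    omega
  have heq : g t.succ - g t.castSucc = 2 := by
    by_contra hne
    have hlt : ∑ u : Fin L, (g u.succ - g u.castSucc) < ∑ _u : Fin L, (2 : ℤ) := by
      refine Finset.sum_lt_sum (fun u _ => hle u) ⟨t, Finset.mem_univ t, ?_⟩
      exact lt_of_le_of_ne (hle t) hne
    rw [hsum] at hlt
    simp [Finset.sum_const, Finset.card_univ] at hlt
    omega
  refine step_class _ _ (hadj t) ?_
  simp only [hg] at heq
  omega

/-- Shortest paths correspond to step sequences. -/
def pathEquiv18 {i j k L : ℕ} (hL : i + j + k = 2 * L) :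
    {f : Fin (L + 1) → ℤ × ℤ × ℤ // IsPath18 L f (0,0,0) ((i : ℤ), (j : ℤ), (k : ℤ))} ≃
    {g : Fin L → Fin 3 // ∑ t, V18 (g t) = ((i : ℤ), (j : ℤ), (k : ℤ))} where
  toFun := fun ⟨f, hf⟩ => ⟨fun t => classify18 (f t.succ - f t.castSucc), by
    have key : ∀ t : Fin L, V18 (classify18 (f t.succ - f t.castSucc))
        = f t.succ - f t.castSucc := by
      intro t
      obtain ⟨m, hm⟩ := path_steps hL hf t
      rw [hm, add_sub_cancel_left, classify18_V]
    simp only [key, telescope18, hf.2.1, hf.1]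
    simp⟩
  invFun := fun ⟨g, hg⟩ => ⟨Fin.partialSum (fun t => V18 (g t)), by
    refine ⟨by simp [Prod.ext_iff], by rw [partialSum_last, hg], fun t => ?_⟩
    rw [Fin.partialSum_succ]
    exact adj18_V _ _⟩
  left_inv := fun ⟨f, hf⟩ => by
    apply Subtype.ext
    have key : ∀ t : Fin L, V18 (classify18 (f t.succ - f t.castSucc))
        = f t.succ - f t.castSucc := by
      intro t
      obtain ⟨m, hm⟩ := path_steps hL hf t
      rw [hm, add_sub_cancel_left, classify18_V]
    simp only [key]
    exact partialSum_steps f hf.1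
  right_inv := fun ⟨g, hg⟩ => by
    apply Subtype.ext
    funext t
    simp only [Fin.partialSum_succ, add_sub_cancel_left, classify18_V]

lemma count_sum_V18 {L : ℕ} (g : Fin L → Fin 3) :
    ∑ t, V18 (g t) = ∑ m : Fin 3, (#{t | g t = m}) • V18 m := by
  rw [← Finset.sum_fiberwise' Finset.univ g V18]
  exact Finset.sum_congr rfl fun m _ => Finset.sum_const _

lemma count_total {L : ℕ} (g : Fin L → Fin 3) :
    ∑ m : Fin 3, #{t | g t = m} = L := by
  have h := Finset.card_eq_sum_card_fiberwise (s := (Finset.univ : Finset (Fin L)))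
    (t := Finset.univ) (f := g) (fun t _ => Finset.mem_univ (g t))
  simpa using h.symm

lemma sum_V18_iff {i j k L : ℕ} (hL : i + j + k = 2 * L)
    (hi : i ≤ L) (hj : j ≤ L) (hk : k ≤ L) (g : Fin L → Fin 3) :
    (∑ t, V18 (g t) = ((i : ℤ), (j : ℤ), (k : ℤ))) ↔
      (#{t | g t = 0} = L - i ∧ #{t | g t = 1} = L - j ∧ #{t | g t = 2} = L - k) := by
  rw [count_sum_V18, Fin.sum_univ_three]
  have htot := count_total g
  rw [Fin.sum_univ_three] at htot
  simp only [V18, Matrix.cons_val_zero, Matrix.cons_val_one, Matrix.head_cons,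
    Matrix.cons_val_two, Matrix.tail_cons, Prod.smul_mk, Prod.mk_add_mk,
    Prod.mk.injEq, nsmul_eq_mul, mul_one, mul_zero, zero_add, add_zero]
  omega

section pairs
variable {L : ℕ}

def stepFun (A B : Finset (Fin L)) : Fin L → Fin 3 :=
  fun t => if t ∈ A then 0 else if t ∈ B then 1 else 2

lemma stepFun_filt0 (A B : Finset (Fin L)) (hd : Disjoint A B) :
    ({t | stepFun A B t = 0} : Finset (Fin L)) = A := by
  ext t
  by_cases hA : t ∈ A
  · simp [stepFun, hA]
  · by_cases hB : t ∈ B <;> simp [stepFun, hA, hB]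

lemma stepFun_filt1 (A B : Finset (Fin L)) (hd : Disjoint A B) :
    ({t | stepFun A B t = 1} : Finset (Fin L)) = B := by
  ext t
  rw [Finset.mem_filter]
  by_cases hA : t ∈ A
  · simp [stepFun, hA, Finset.disjoint_left.1 hd hA]
  · by_cases hB : t ∈ B <;> simp [stepFun, hA, hB]

lemma stepFun_filt2 (A B : Finset (Fin L)) (hd : Disjoint A B) :
    ({t | stepFun A B t = 2} : Finset (Fin L)) = (A ∪ B)ᶜ := by
  ext t
  rw [Finset.mem_filter]
  by_cases hA : t ∈ A
  · simp [stepFun, hA]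
  · by_cases hB : t ∈ B <;> simp [stepFun, hA, hB]

def gEquivPairs {a b c : ℕ} (habc : a + b + c = L) :
    {g : Fin L → Fin 3 // #{t | g t = 0} = a ∧ #{t | g t = 1} = b ∧ #{t | g t = 2} = c} ≃
    {AB : Finset (Fin L) × Finset (Fin L) //
        AB.1.card = a ∧ AB.2.card = b ∧ Disjoint AB.1 AB.2} where
  toFun := fun x => ⟨(Finset.univ.filter fun t => x.1 t = 0,
      Finset.univ.filter fun t => x.1 t = 1), x.2.1, x.2.2.1, by
    rw [Finset.disjoint_left]
    intro t ht0 ht1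
    simp only [Finset.mem_filter] at ht0 ht1
    rw [ht0.2] at ht1
    exact absurd ht1.2 (by decide)⟩
  invFun := fun x => ⟨stepFun x.1.1 x.1.2, by
    rw [stepFun_filt0 _ _ x.2.2.2, stepFun_filt1 _ _ x.2.2.2, stepFun_filt2 _ _ x.2.2.2]
    refine ⟨x.2.1, x.2.2.1, ?_⟩
    rw [Finset.card_compl, Finset.card_union_of_disjoint x.2.2.2, Fintype.card_fin,
      x.2.1, x.2.2.1]
    omega⟩
  left_inv := fun x => by
    apply Subtype.ext
    funext t
    have htri : x.1 t = 0 ∨ x.1 t = 1 ∨ x.1 t = 2 := by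
      have h3 : ∀ m : Fin 3, m = 0 ∨ m = 1 ∨ m = 2 := by decide
      exact h3 (x.1 t)
    rcases htri with h | h | h <;>
      simp [stepFun, Finset.mem_filter, h]
  right_inv := fun x => by
    apply Subtype.ext
    exact Prod.ext (stepFun_filt0 _ _ x.2.2.2) (stepFun_filt1 _ _ x.2.2.2)
end pairs

/-- counting pairs of disjoint finsets with prescribed cardinalities -/
lemma card_disjoint_pairs (n a b : ℕ) :
    Nat.card {AB : Finset (Fin n) × Finset (Fin n) //
        AB.1.card = a ∧ AB.2.card = b ∧ Disjoint AB.1 AB.2} =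
      n.choose a * (n - a).choose b := by
  rw [Nat.card_eq_fintype_card]
  have e : {AB : Finset (Fin n) × Finset (Fin n) //
        AB.1.card = a ∧ AB.2.card = b ∧ Disjoint AB.1 AB.2} ≃
      Σ A : {A : Finset (Fin n) // A.card = a},
        {B : Finset (Fin n) // B ∈ (A : Finset (Fin n))ᶜ.powersetCard b} :=
    { toFun := fun x => ⟨⟨x.1.1, x.2.1⟩, ⟨x.1.2, by
        rw [Finset.mem_powersetCard]
        exact ⟨le_compl_iff_disjoint_left.2 x.2.2.2, x.2.2.1⟩⟩⟩
      invFun := fun x => ⟨(x.1.1, x.2.1), x.1.2,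
        (Finset.mem_powersetCard.1 x.2.2).2,
        le_compl_iff_disjoint_left.1 (Finset.mem_powersetCard.1 x.2.2).1⟩
      left_inv := fun x => rfl
      right_inv := fun x => rfl }
  rw [Fintype.card_congr e, Fintype.card_sigma]
  have hcard : ∀ A : {A : Finset (Fin n) // A.card = a},
      Fintype.card {B : Finset (Fin n) // B ∈ (A : Finset (Fin n))ᶜ.powersetCard b}
        = (n - a).choose b := by
    intro A
    rw [Fintype.card_coe, Finset.card_powersetCard, Finset.card_compl,
      Fintype.card_fin, A.2]
  simp only [hcard, Finset.sum_const, Finset.card_univ, Fintype.card_finset_len,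
    Fintype.card_fin, smul_eq_mul]

lemma fact_div18 (a b c L : ℕ) (h : a + b + c = L) :
    L.factorial / (a.factorial * b.factorial * c.factorial)
      = L.choose a * (L - a).choose b := by
  have ha : a ≤ L := by omega
  have hb : b ≤ L - a := by omega
  have h1 := Nat.choose_mul_factorial_mul_factorial ha
  have h2 := Nat.choose_mul_factorial_mul_factorial hb
  have hc : L - a - b = c := by omega
  rw [hc] at h2
  apply Nat.div_eq_of_eq_mul_left
  · positivity
  · rw [← h1, ← h2]
    ring

/-- When `i+j+k = 2L` and `L ≥ max(i,j,k)`, the number of shortest 18-neighbor paths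
from the origin to `(i,j,k)` equals `L!/((L−i)!·(L−j)!·(L−k)!)`. -/
theorem count_shortest_paths_18N_even (i j k L : ℕ)
    (hL : i + j + k = 2 * L) (hi : i ≤ L) (hj : j ≤ L) (hk : k ≤ L) :
    Nat.card {f : Fin (L + 1) → ℤ × ℤ × ℤ //
        IsPath18 L f (0, 0, 0) ((i : ℤ), (j : ℤ), (k : ℤ))} =
      Nat.factorial L /
        (Nat.factorial (L - i) * Nat.factorial (L - j) * Nat.factorial (L - k)) := by
  have habc : (L - i) + (L - j) + (L - k) = L := by omega
  rw [Nat.card_congr (pathEquiv18 hL),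
    Nat.card_congr (Equiv.subtypeEquivRight (fun g => sum_V18_iff hL hi hj hk g)),
    Nat.card_congr (gEquivPairs habc), card_disjoint_pairs,
    fact_div18 (L - i) (L - j) (L - k) L habc]
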